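/- arXiv:2005.11653 — 3 statements merged into one kernel-verified Lean document; each statement's English description precedes it below -/
import Mathlib

section
/- Let (X, d) be a metric space, let μ and ν be probability measures on X, and let γ be a probability measure on X × X whose first marginal is μ and whose second marginal is ν (a coupling of μ and ν). Let h, h' : X → ℝ be 1-Lipschitz functions, and assume the function (x, y) ↦ d(x, y) is integrable with respect to γ and x ↦ |h x − h' x| is integrable with respect to both μ and ν. Then ∫ |h(x) − h'(x)| dν(x) ≤ ∫ |h(x) − h'(x)| dμ(x) + 2 ∫ d(x, y) dγ(x, y). -/
open MeasureTheory

theorem coupling_disagreement_transfer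
    {X : Type*} [MetricSpace X] [MeasurableSpace X]
    (μ ν : Measure X) [IsProbabilityMeasure μ] [IsProbabilityMeasure ν]
    (γ : Measure (X × X)) [IsProbabilityMeasure γ]
    (hγ₁ : γ.map Prod.fst = μ) (hγ₂ : γ.map Prod.snd = ν)
    (h h' : X → ℝ) (hLh : LipschitzWith 1 h) (hLh' : LipschitzWith 1 h')
    (hdist : Integrable (fun p : X × X => dist p.1 p.2) γ)
    (hμint : Integrable (fun x => |h x - h' x|) μ)
    (hνint : Integrable (fun x => |h x - h' x|) ν) :
    ∫ x, |h x - h' x| ∂ν ≤ ∫ x, |h x - h' x| ∂μ + 2 * ∫ p, dist p.1 p.2 ∂γ := by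
  set f : X → ℝ := fun x => |h x - h' x| with hf
  have hμint' : Integrable (fun p : X × X => f p.1) γ := by
    rw [← hγ₁] at hμint
    exact (integrable_map_measure hμint.aestronglyMeasurable measurable_fst.aemeasurable).mp hμint
  have hνint' : Integrable (fun p : X × X => f p.2) γ := by
    rw [← hγ₂] at hνint
    exact (integrable_map_measure hνint.aestronglyMeasurable measurable_snd.aemeasurable).mp hνint
  have h1 : ∫ x, f x ∂μ = ∫ p, f p.1 ∂γ := by
    rw [← hγ₁, integral_map measurable_fst.aemeasurable]
    rw [hγ₁]; exact hμint.aestronglyMeasurable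
  have h2 : ∫ x, f x ∂ν = ∫ p, f p.2 ∂γ := by
    rw [← hγ₂, integral_map measurable_snd.aemeasurable]
    rw [hγ₂]; exact hνint.aestronglyMeasurable
  have key : ∀ p : X × X, f p.2 ≤ f p.1 + 2 * dist p.1 p.2 := by
    rintro ⟨x, y⟩
    simp only [hf]
    have h3 : |h y - h' y| - |h x - h' x| ≤ |(h y - h' y) - (h x - h' x)| :=
      abs_sub_abs_le_abs_sub _ _
    have h4 : |(h y - h' y) - (h x - h' x)| ≤ |h y - h x| + |h' x - h' y| := by
      have : (h y - h' y) - (h x - h' x) = (h y - h x) + (h' x - h' y) := by ring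
      rw [this]; exact abs_add_le _ _
    have h5 : |h y - h x| ≤ dist x y := by
      rw [← Real.dist_eq, dist_comm]
      simpa using hLh.dist_le_mul x y
    have h6 : |h' x - h' y| ≤ dist x y := by
      rw [← Real.dist_eq]
      simpa using hLh'.dist_le_mul x y
    linarith
  rw [h1, h2, ← integral_const_mul, ← integral_add hμint' (hdist.const_mul 2)]
  exact integral_mono hνint' (hμint'.add (hdist.const_mul 2)) key
end

section
/- Let (X, d) be a metric space, let μ (source distribution) and ν (target distribution) be probability measures on X, and let γ be a probability measure on X × X whose first marginal is μ and whose second marginal is ν. Let h : X → ℝ (the hypothesis), f_S : X → ℝ (the source labeling function) and f_T : X → ℝ (the target labeling function) be 1-Lipschitz, and assume (x, y) ↦ d(x, y) is integrable with respect to γ, and that |h − f_T|, |h − f_S| and |f_S − f_T| are integrable with respect to both μ and ν. Then the target risk satisfies ∫ |h(x) − f_T(x)| dν(x) ≤ ∫ |h(x) − f_S(x)| dμ(x) + 2 ∫ d(x, y) dγ(x, y) + ∫ |f_S(x) − f_T(x)| dμ(x). -/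
open MeasureTheory

theorem conditional_shift_bound_primal
    {X : Type*} [MetricSpace X] [MeasurableSpace X]
    (μ ν : Measure X) [IsProbabilityMeasure μ] [IsProbabilityMeasure ν]
    (γ : Measure (X × X)) [IsProbabilityMeasure γ]
    (hγ₁ : γ.map Prod.fst = μ) (hγ₂ : γ.map Prod.snd = ν)
    (h fS fT : X → ℝ)
    (hLh : LipschitzWith 1 h) (hLfS : LipschitzWith 1 fS) (hLfT : LipschitzWith 1 fT)
    (hdist : Integrable (fun p : X × X => dist p.1 p.2) γ)
    (hμ₁ : Integrable (fun x => |h x - fT x|) μ)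
    (hν₁ : Integrable (fun x => |h x - fT x|) ν)
    (hμ₂ : Integrable (fun x => |h x - fS x|) μ)
    (hν₂ : Integrable (fun x => |h x - fS x|) ν)
    (hμ₃ : Integrable (fun x => |fS x - fT x|) μ)
    (hν₃ : Integrable (fun x => |fS x - fT x|) ν) :
    ∫ x, |h x - fT x| ∂ν ≤
      ∫ x, |h x - fS x| ∂μ + 2 * ∫ p, dist p.1 p.2 ∂γ +
        ∫ x, |fS x - fT x| ∂μ := by
  have hfst : AEMeasurable (Prod.fst : X × X → X) γ := measurable_fst.aemeasurable
  have hsnd : AEMeasurable (Prod.snd : X × X → X) γ := measurable_snd.aemeasurable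
  -- integrability of pullbacks
  have hIμ₁ : Integrable (fun p : X × X => |h p.1 - fT p.1|) γ := by
    have := (integrable_map_measure (hγ₁ ▸ hμ₁.aestronglyMeasurable) hfst).mp (hγ₁ ▸ hμ₁)
    exact this
  have hIν₁ : Integrable (fun p : X × X => |h p.2 - fT p.2|) γ := by
    exact (integrable_map_measure (hγ₂ ▸ hν₁.aestronglyMeasurable) hsnd).mp (hγ₂ ▸ hν₁)
  -- step 1: rewrite ν-integral as γ-integral
  have e1 : ∫ x, |h x - fT x| ∂ν = ∫ p : X × X, |h p.2 - fT p.2| ∂γ := by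
    rw [← hγ₂, integral_map hsnd (hγ₂ ▸ hν₁.aestronglyMeasurable)]
  have e2 : ∫ x, |h x - fT x| ∂μ = ∫ p : X × X, |h p.1 - fT p.1| ∂γ := by
    rw [← hγ₁, integral_map hfst (hγ₁ ▸ hμ₁.aestronglyMeasurable)]
  -- pointwise bound
  have key : ∫ p : X × X, |h p.2 - fT p.2| ∂γ ≤
      ∫ p : X × X, (|h p.1 - fT p.1| + 2 * dist p.1 p.2) ∂γ := by
    apply integral_mono hIν₁ (hIμ₁.add (hdist.const_mul 2))
    intro p
    have h1 : |h p.2 - h p.1| ≤ dist p.1 p.2 := by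
      have := hLh.dist_le_mul p.2 p.1
      simp only [NNReal.coe_one, one_mul] at this
      calc |h p.2 - h p.1| = dist (h p.2) (h p.1) := (Real.dist_eq _ _).symm
        _ ≤ dist p.2 p.1 := this
        _ = dist p.1 p.2 := dist_comm _ _
    have h2 : |fT p.1 - fT p.2| ≤ dist p.1 p.2 := by
      have := hLfT.dist_le_mul p.1 p.2
      simpa [Real.dist_eq] using this
    calc |h p.2 - fT p.2| = |(h p.1 - fT p.1) + (h p.2 - h p.1) + (fT p.1 - fT p.2)| := by
          ring_nf
      _ ≤ |(h p.1 - fT p.1) + (h p.2 - h p.1)| + |fT p.1 - fT p.2| := abs_add_le _ _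
      _ ≤ |h p.1 - fT p.1| + |h p.2 - h p.1| + |fT p.1 - fT p.2| := by
          gcongr; exact abs_add_le _ _
      _ ≤ |h p.1 - fT p.1| + dist p.1 p.2 + dist p.1 p.2 := by gcongr
      _ = |h p.1 - fT p.1| + 2 * dist p.1 p.2 := by ring
  have e3 : ∫ p : X × X, (|h p.1 - fT p.1| + 2 * dist p.1 p.2) ∂γ =
      ∫ x, |h x - fT x| ∂μ + 2 * ∫ p : X × X, dist p.1 p.2 ∂γ := by
    rw [integral_add hIμ₁ (hdist.const_mul 2), MeasureTheory.integral_const_mul, e2]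
  -- step 2: bound μ-integral by triangle inequality
  have key2 : ∫ x, |h x - fT x| ∂μ ≤ ∫ x, |h x - fS x| ∂μ + ∫ x, |fS x - fT x| ∂μ := by
    rw [← integral_add hμ₂ hμ₃]
    apply integral_mono hμ₁ (hμ₂.add hμ₃)
    intro x
    calc |h x - fT x| = |(h x - fS x) + (fS x - fT x)| := by ring_nf
      _ ≤ |h x - fS x| + |fS x - fT x| := abs_add_le _ _
  rw [e1]
  calc ∫ p : X × X, |h p.2 - fT p.2| ∂γ
      ≤ ∫ x, |h x - fT x| ∂μ + 2 * ∫ p : X × X, dist p.1 p.2 ∂γ := e3 ▸ key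
    _ ≤ (∫ x, |h x - fS x| ∂μ + ∫ x, |fS x - fT x| ∂μ) + 2 * ∫ p : X × X, dist p.1 p.2 ∂γ := by
        gcongr
    _ = _ := by ring
end

section
/- Let (X, d) be a metric space, let μ (source distribution) and ν (target distribution) be probability measures on X, and let γ be a probability measure on X × X whose first marginal is μ and whose second marginal is ν. Let h, f_S, f_T : X → ℝ be 1-Lipschitz, assume (x, y) ↦ d(x, y) is integrable with respect to γ, and assume |h − f_T|, |h − f_S| and |f_S − f_T| are integrable with respect to both μ and ν. Then the target risk satisfies ∫ |h(x) − f_T(x)| dν(x) ≤ ∫ |h(x) − f_S(x)| dμ(x) + 2 ∫ d(x, y) dγ(x, y) + min( ∫ |f_S(x) − f_T(x)| dμ(x), ∫ |f_S(x) − f_T(x)| dν(x) ). -/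
open MeasureTheory

lemma transport_lemma
    {X : Type*} [MetricSpace X] [MeasurableSpace X]
    (μ ν : Measure X) (γ : Measure (X × X))
    (hγ₁ : γ.map Prod.fst = μ) (hγ₂ : γ.map Prod.snd = ν)
    (g : X → ℝ)
    (hg : ∀ x y : X, g y - g x ≤ 2 * dist x y)
    (hdist : Integrable (fun p : X × X => dist p.1 p.2) γ)
    (hμ : Integrable g μ) (hν : Integrable g ν) :
    ∫ x, g x ∂ν ≤ ∫ x, g x ∂μ + 2 * ∫ p, dist p.1 p.2 ∂γ := by
  have hmf : Measurable (Prod.fst : X × X → X) := measurable_fst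
  have hms : Measurable (Prod.snd : X × X → X) := measurable_snd
  have hgm : AEStronglyMeasurable g (γ.map Prod.fst) := hγ₁ ▸ hμ.1
  have hgm2 : AEStronglyMeasurable g (γ.map Prod.snd) := hγ₂ ▸ hν.1
  have h1 : Integrable (fun p : X × X => g p.1) γ := by
    rw [← hγ₁] at hμ
    exact (integrable_map_measure hgm hmf.aemeasurable).mp hμ
  have h2 : Integrable (fun p : X × X => g p.2) γ := by
    rw [← hγ₂] at hν
    exact (integrable_map_measure hgm2 hms.aemeasurable).mp hν
  have e1 : ∫ x, g x ∂μ = ∫ p : X × X, g p.1 ∂γ := by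
    rw [← hγ₁, integral_map hmf.aemeasurable hgm]
  have e2 : ∫ x, g x ∂ν = ∫ p : X × X, g p.2 ∂γ := by
    rw [← hγ₂, integral_map hms.aemeasurable hgm2]
  rw [e1, e2]
  have key : ∫ p : X × X, (g p.2 - g p.1) ∂γ ≤ ∫ p : X × X, 2 * dist p.1 p.2 ∂γ := by
    apply integral_mono (h2.sub h1) (hdist.const_mul 2)
    intro p
    exact hg p.1 p.2
  rw [integral_sub h2 h1] at key
  rw [integral_const_mul] at key
  linarith

theorem conditional_shift_bound_min
    {X : Type*} [MetricSpace X] [MeasurableSpace X]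
    (μ ν : Measure X) [IsProbabilityMeasure μ] [IsProbabilityMeasure ν]
    (γ : Measure (X × X)) [IsProbabilityMeasure γ]
    (hγ₁ : γ.map Prod.fst = μ) (hγ₂ : γ.map Prod.snd = ν)
    (h fS fT : X → ℝ)
    (hLh : LipschitzWith 1 h) (hLfS : LipschitzWith 1 fS) (hLfT : LipschitzWith 1 fT)
    (hdist : Integrable (fun p : X × X => dist p.1 p.2) γ)
    (hμ₁ : Integrable (fun x => |h x - fT x|) μ)
    (hν₁ : Integrable (fun x => |h x - fT x|) ν)
    (hμ₂ : Integrable (fun x => |h x - fS x|) μ)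
    (hν₂ : Integrable (fun x => |h x - fS x|) ν)
    (hμ₃ : Integrable (fun x => |fS x - fT x|) μ)
    (hν₃ : Integrable (fun x => |fS x - fT x|) ν) :
    ∫ x, |h x - fT x| ∂ν ≤
      ∫ x, |h x - fS x| ∂μ + 2 * ∫ p, dist p.1 p.2 ∂γ +
        min (∫ x, |fS x - fT x| ∂μ) (∫ x, |fS x - fT x| ∂ν) := by
  have lip2 : ∀ (a b : X → ℝ), LipschitzWith 1 a → LipschitzWith 1 b →
      ∀ x y : X, |a y - b y| - |a x - b x| ≤ 2 * dist x y := by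
    intro a b ha hb x y
    have h1 : dist (a x) (a y) ≤ dist x y := by simpa using ha.dist_le_mul x y
    have h2 : dist (b x) (b y) ≤ dist x y := by simpa using hb.dist_le_mul x y
    rw [Real.dist_eq] at h1 h2
    have := abs_le.mp h1
    have := abs_le.mp h2
    cases abs_cases (a y - b y) <;> cases abs_cases (a x - b x) <;> linarith [this.1]
  -- Path A: transport |h - fT| then triangle under μ
  have pathA : ∫ x, |h x - fT x| ∂ν ≤
      ∫ x, |h x - fS x| ∂μ + 2 * ∫ p, dist p.1 p.2 ∂γ + ∫ x, |fS x - fT x| ∂μ := by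
    have t := transport_lemma μ ν γ hγ₁ hγ₂ _ (lip2 h fT hLh hLfT) hdist hμ₁ hν₁
    have tri : ∫ x, |h x - fT x| ∂μ ≤ ∫ x, |h x - fS x| ∂μ + ∫ x, |fS x - fT x| ∂μ := by
      rw [← integral_add hμ₂ hμ₃]
      apply integral_mono hμ₁ (hμ₂.add hμ₃)
      intro x
      calc |h x - fT x| = |(h x - fS x) + (fS x - fT x)| := by ring_nf
        _ ≤ |h x - fS x| + |fS x - fT x| := abs_add_le _ _
    linarith
  -- Path B: triangle under ν then transport |h - fS|
  have pathB : ∫ x, |h x - fT x| ∂ν ≤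
      ∫ x, |h x - fS x| ∂μ + 2 * ∫ p, dist p.1 p.2 ∂γ + ∫ x, |fS x - fT x| ∂ν := by
    have t := transport_lemma μ ν γ hγ₁ hγ₂ _ (lip2 h fS hLh hLfS) hdist hμ₂ hν₂
    have tri : ∫ x, |h x - fT x| ∂ν ≤ ∫ x, |h x - fS x| ∂ν + ∫ x, |fS x - fT x| ∂ν := by
      rw [← integral_add hν₂ hν₃]
      apply integral_mono hν₁ (hν₂.add hν₃)
      intro x
      calc |h x - fT x| = |(h x - fS x) + (fS x - fT x)| := by ring_nf
        _ ≤ |h x - fS x| + |fS x - fT x| := abs_add_le _ _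
    linarith
  rcases le_total (∫ x, |fS x - fT x| ∂μ) (∫ x, |fS x - fT x| ∂ν) with hc | hc
  · rw [min_eq_left hc]; exact pathA
  · rw [min_eq_right hc]; exact pathB
end
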